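/- For 0 < m < n < 2m with gcd(m,n) = 1 and alphabet Σ of size k ≥ 2, let r(i,k,l) denote the base-k representation of i padded with leading zeros to length l, let T(m,n) = { r(i,k,n−m) 0^{2m−n} r(i+1,k,n−m) : 0 ≤ i ≤ k^{n−m} − 2 }, and let S = (Σ^m ∪ Σ^n) \ T(m,n). Then S* is co-finite and the longest words not in S* have length exactly g(m, l) = m·l − m − l, where l = m·k^{n−m} + (n−m). -/

import Mathlib

open Computability

namespace StmtThirteen

variable {k : ℕ}

def fv (w : List (Fin k)) : ℕ := w.foldl (fun acc d => acc * k + d.val) 0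

lemma foldl_acc (w : List (Fin k)) : ∀ a : ℕ,
    w.foldl (fun acc d => acc * k + d.val) a = a * k ^ w.length + fv w := by
  induction w with
  | nil => intro a; simp [fv]
  | cons d w ih =>
    intro a
    simp only [List.foldl_cons, List.length_cons, fv] at *
    rw [ih (a * k + d.val), ih (0 * k + d.val)]
    rw [pow_succ]
    ring

lemma fv_cons (d : Fin k) (w : List (Fin k)) :
    fv (d :: w) = d.val * k ^ w.length + fv w := by
  simp only [fv, List.foldl_cons]
  simpa [fv] using foldl_acc w (0 * k + d.val)

lemma fv_lt (w : List (Fin k)) : fv w < k ^ w.length := by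
  induction w with
  | nil => simp [fv]
  | cons d w ih =>
    have hd : d.val + 1 ≤ k := d.isLt
    rw [fv_cons, List.length_cons, pow_succ]
    calc d.val * k ^ w.length + fv w < d.val * k ^ w.length + k ^ w.length := by omega
    _ = (d.val + 1) * k ^ w.length := by ring
    _ ≤ k * k ^ w.length := Nat.mul_le_mul_right _ hd
    _ = k ^ w.length * k := by ring

lemma fv_append_singleton (w : List (Fin k)) (d : Fin k) :
    fv (w ++ [d]) = fv w * k + d.val := by
  simp [fv, List.foldl_append]

def rep (hk : 0 < k) : ℕ → ℕ → List (Fin k)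
  | 0, _ => []
  | len+1, i => rep hk len (i / k) ++ [⟨i % k, Nat.mod_lt i hk⟩]

lemma length_rep (hk : 0 < k) (len : ℕ) : ∀ i, (rep hk len i).length = len := by
  induction len with
  | zero => intro i; rfl
  | succ len ih => intro i; simp [rep, ih]

lemma fv_rep (hk : 0 < k) (len : ℕ) : ∀ i, i < k ^ len → fv (rep hk len i) = i := by
  induction len with
  | zero =>
    intro i hi
    have : i = 0 := by simpa using hi
    subst this; rfl
  | succ len ih =>
    intro i hi
    have hdiv : i / k < k ^ len := by
      rw [Nat.div_lt_iff_lt_mul hk]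
      rw [pow_succ] at hi; exact hi
    rw [rep, fv_append_singleton, ih _ hdiv]
    show i / k * k + i % k = i
    rw [Nat.mul_comm]
    exact Nat.div_add_mod i k


def zl (hk : 0 < k) : Fin k := ⟨0, hk⟩

def blockW (hk : 0 < k) (d z i : ℕ) : List (Fin k) :=
  rep hk d i ++ List.replicate z (zl hk)

lemma length_blockW (hk : 0 < k) (d z i : ℕ) : (blockW hk d z i).length = d + z := by
  simp [blockW, length_rep]

def chain (hk : 0 < k) (d z : ℕ) : ℕ → ℕ → List (Fin k)
  | _, 0 => []
  | i, c+1 => blockW hk d z i ++ chain hk d z (i+1) c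

lemma length_chain (hk : 0 < k) (d z : ℕ) : ∀ c i, (chain hk d z i c).length = c * (d + z) := by
  intro c
  induction c with
  | zero => intro i; simp [chain]
  | succ c ih => intro i; simp [chain, length_blockW, ih]; ring

lemma chain_drop (hk : 0 < k) (d z : ℕ) :
    ∀ j c i, j ≤ c → (chain hk d z i c).drop (j * (d + z)) = chain hk d z (i + j) (c - j) := by
  intro j
  induction j with
  | zero => intro c i _; simp
  | succ j ih =>
    intro c i hj
    obtain ⟨c', rfl⟩ : ∃ c', c = c' + 1 := ⟨c - 1, by omega⟩
    have h1 : (j + 1) * (d + z) = j * (d + z) + (d + z) := by ring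
    rw [h1, ← List.drop_drop, ih (c' + 1) i (by omega)]
    obtain ⟨c'', hc''⟩ : ∃ c'', c' + 1 - j = c'' + 1 := ⟨c' - j, by omega⟩
    rw [hc'']
    show (blockW hk d z (i + j) ++ chain hk d z (i + j + 1) c'').drop (d + z) = _
    rw [← length_blockW hk d z (i + j), List.drop_left]
    congr 1 <;> omega

lemma chain_take (hk : 0 < k) (d z : ℕ) (i c : ℕ) (Y : List (Fin k)) (hc : 2 ≤ c) :
    ((chain hk d z i c) ++ Y).take ((d + z) + d) =
      (rep hk d i ++ List.replicate z (zl hk)) ++ rep hk d (i + 1) := by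
  obtain ⟨c', rfl⟩ : ∃ c', c = c' + 2 := ⟨c - 2, by omega⟩
  show ((blockW hk d z i ++ chain hk d z (i+1) (c'+1)) ++ Y).take ((d + z) + d) = _
  rw [List.append_assoc]
  rw [show (d + z) + d = (blockW hk d z i).length + d by rw [length_blockW]]
  rw [List.take_length_add_append]
  have h2 : (chain hk d z (i+1) (c'+1) ++ Y).take d = rep hk d (i + 1) := by
    show ((blockW hk d z (i+1) ++ chain hk d z (i+2) c') ++ Y).take d = _
    rw [List.append_assoc]
    show ((rep hk d (i+1) ++ List.replicate z (zl hk)) ++ _).take d = _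
    rw [List.append_assoc]
    rw [List.take_append_of_le_length (by rw [length_rep])]
    exact List.take_of_length_le (by rw [length_rep])
  rw [h2]
  rfl


def cyc (hk : 0 < k) (d z K : ℕ) : List (Fin k) :=
  chain hk d z 0 K ++ List.replicate d (zl hk)

lemma length_cyc (hk : 0 < k) (d z K : ℕ) : (cyc hk d z K).length = K * (d + z) + d := by
  simp [cyc, length_chain]

lemma length_flatten_replicate (c : ℕ) (x : List (Fin k)) :
    (List.replicate c x).flatten.length = c * x.length := by
  induction c with
  | zero => simp
  | succ c ih => simp [List.replicate_succ, ih]; ring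

lemma drop_flatten_replicate (x : List (Fin k)) :
    ∀ r c, r ≤ c → (List.replicate c x).flatten.drop (r * x.length) =
      (List.replicate (c - r) x).flatten := by
  intro r
  induction r with
  | zero => intro c _; simp
  | succ r ih =>
    intro c hr
    obtain ⟨c', rfl⟩ : ∃ c', c = c' + 1 := ⟨c - 1, by omega⟩
    rw [List.replicate_succ, List.flatten_cons,
      show (r + 1) * x.length = x.length + r * x.length by ring,
      ← List.drop_drop, List.drop_left, ih c' (by omega),
      show c' - r = c' + 1 - (r + 1) by omega]

/-- The factor of the big periodic word at position `r*l + j*m`. -/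
lemma factor_eq (hk : 0 < k) (d z K R : ℕ) (r j : ℕ)
    (hr : r + 1 ≤ R) (hj : j + 2 ≤ K) :
    (((List.replicate R (cyc hk d z K)).flatten.drop (r * (K * (d+z) + d) + j * (d+z))).take
        ((d+z)+d)) = (rep hk d j ++ List.replicate z (zl hk)) ++ rep hk d (j+1) := by
  have hlen := length_cyc hk d z K
  rw [← List.drop_drop]
  rw [show r * (K * (d+z) + d) = r * (cyc hk d z K).length by rw [hlen]]
  rw [drop_flatten_replicate _ r R (by omega)]
  obtain ⟨R', hR'⟩ : ∃ R', R - r = R' + 1 := ⟨R - r - 1, by omega⟩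
  rw [hR', List.replicate_succ, List.flatten_cons]
  rw [cyc, List.append_assoc]
  rw [List.drop_append_of_le_length (by rw [length_chain]; exact Nat.mul_le_mul_right _ (by omega))]
  rw [chain_drop hk d z j K 0 (by omega)]
  rw [show (0 + j) = j by omega]
  rw [chain_take hk d z j (K - j) _ (by omega)]


def Tc (hk : 0 < k) (m n : ℕ) : Language (Fin k) :=
  {w | ∃ u v : List (Fin k), u.length = n - m ∧ v.length = n - m ∧ fv v = fv u + 1 ∧
    w = u ++ List.replicate (2 * m - n) (zl hk) ++ v}

def Sc (hk : 0 < k) (m n : ℕ) : Language (Fin k) :=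
  {w | (w.length = m ∨ w.length = n) ∧ w ∉ Tc hk m n}

lemma length_of_mem_Tc {hk : 0 < k} {m n : ℕ} (hmn : m < n) (hn2m : n < 2 * m)
    {w : List (Fin k)} (h : w ∈ Tc hk m n) : w.length = n := by
  obtain ⟨u, v, hu, hv, -, rfl⟩ := h
  simp only [List.length_append, List.length_replicate, hu, hv]
  omega

lemma cons_mem_kstar {L : Language (Fin k)} {a y : List (Fin k)}
    (ha : a ∈ L) (hy : y ∈ L∗) : a ++ y ∈ L∗ := by
  rw [Language.mem_kstar] at hy ⊢
  obtain ⟨M, rfl, hM⟩ := hy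
  exact ⟨a :: M, rfl, by
    intro c hc
    rcases List.mem_cons.mp hc with rfl | hc
    exacts [ha, hM _ hc]⟩

lemma append_mem_kstar {L : Language (Fin k)} {x y : List (Fin k)}
    (hx : x ∈ L∗) (hy : y ∈ L∗) : x ++ y ∈ L∗ := by
  rw [Language.mem_kstar] at hx hy ⊢
  obtain ⟨M, rfl, hM⟩ := hx
  obtain ⟨M', rfl, hM'⟩ := hy
  exact ⟨M ++ M', List.flatten_append.symm, by
    intro c hc; rcases List.mem_append.mp hc with h | h; exacts [hM _ h, hM' _ h]⟩

lemma mdvd_mem (hk : 0 < k) {m n : ℕ} (hm : 0 < m) (hmn : m < n) (hn2m : n < 2 * m) :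
    ∀ N (w : List (Fin k)), w.length = N → m ∣ N → w ∈ (Sc hk m n)∗ := by
  intro N
  induction N using Nat.strong_induction_on with
  | _ N ih =>
    intro w hlen hdvd
    rcases Nat.eq_zero_or_pos N with rfl | hN
    · rw [List.length_eq_zero_iff] at hlen
      subst hlen
      exact Language.nil_mem_kstar _
    · have hmN : m ≤ N := Nat.le_of_dvd hN hdvd
      have h1 : w = w.take m ++ w.drop m := (List.take_append_drop m w).symm
      rw [h1]
      apply cons_mem_kstar
      · constructor
        · left
          rw [List.length_take, hlen]
          omega
        · intro hT
          have := length_of_mem_Tc hmn hn2m hT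
          rw [List.length_take, hlen] at this
          omega
      · exact ih (N - m) (by omega) _ (by rw [List.length_drop, hlen]) (by
          obtain ⟨c, rfl⟩ := hdvd
          exact ⟨c - 1, by cases c <;> simp_all <;> ring_nf <;> omega⟩)


lemma partA (hk : 0 < k) (hk2 : 2 ≤ k) {m n : ℕ} (hm2 : 2 ≤ m) (hmn : m < n)
    (hn2m : n < 2 * m) :
    ∀ b (w : List (Fin k)), b * (m * k ^ (n - m) + (n - m)) ≤ w.length →
      w.length ≡ b * (m * k ^ (n - m) + (n - m)) [MOD m] → w ∈ (Sc hk m n)∗ := by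
  have hbr : m * k ^ (n - m) = k ^ (n - m) * m := mul_comm _ _
  have hK2 : 2 ≤ k ^ (n - m) := le_trans hk2 (Nat.le_self_pow (by omega) k)
  intro b
  induction b with
  | zero =>
    intro w h0 hmod
    have hdvd : m ∣ w.length := Nat.modEq_zero_iff_dvd.mp (by simpa using hmod)
    exact mdvd_mem hk (by omega) hmn hn2m _ w rfl hdvd
  | succ b ih =>
    intro w hle hmod
    have hsm : (b + 1) * (m * k ^ (n - m) + (n - m)) =
        b * (m * k ^ (n - m) + (n - m)) + (m * k ^ (n - m) + (n - m)) := by ring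
    have hlw : m * k ^ (n - m) + (n - m) ≤ w.length := by omega
    have hexists : ∃ j, j < k ^ (n - m) ∧ ((w.drop (j * m)).take n) ∉ Tc hk m n := by
      by_contra hcon
      push_neg at hcon
      have hstep : ∀ j, j < k ^ (n - m) →
          fv ((w.drop ((j + 1) * m)).take (n - m)) = fv ((w.drop (j * m)).take (n - m)) + 1 := by
        intro j hj
        obtain ⟨u, v, hu, hv, hfv, heq⟩ := hcon j hj
        have hu' : (w.drop (j * m)).take (n - m) = u := by
          have h1 : ((w.drop (j * m)).take n).take (n - m) = u := by
            rw [heq, List.append_assoc,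
              List.take_append_of_le_length (by omega : n - m ≤ u.length)]
            exact List.take_of_length_le (by omega)
          rw [List.take_take, min_eq_left (by omega)] at h1
          exact h1
        have hv' : (w.drop ((j + 1) * m)).take (n - m) = v := by
          have hlen2 : (u ++ List.replicate (2 * m - n) (zl hk)).length = m := by
            simp only [List.length_append, List.length_replicate, hu]
            omega
          have h1 : ((w.drop (j * m)).take n).drop m = v := by
            have h0 := List.drop_left (l₁ := u ++ List.replicate (2 * m - n) (zl hk)) (l₂ := v)
            rw [hlen2] at h0
            rw [heq]
            exact h0
          rw [List.drop_take, List.drop_drop, show j * m + m = (j + 1) * m by ring] at h1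
          exact h1
        rw [hu', hv', hfv]
      have hge : ∀ j, j ≤ k ^ (n - m) → j ≤ fv ((w.drop (j * m)).take (n - m)) := by
        intro j
        induction j with
        | zero => intro _; exact Nat.zero_le _
        | succ j ihj =>
          intro hj
          rw [hstep j (by omega)]
          have := ihj (by omega)
          omega
      have hbig := hge (k ^ (n - m)) le_rfl
      have hlen3 : ((w.drop (k ^ (n - m) * m)).take (n - m)).length = n - m := by
        rw [List.length_take, List.length_drop]
        omega
      have hsmall := fv_lt ((w.drop (k ^ (n - m) * m)).take (n - m))
      rw [hlen3] at hsmall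
      omega
    obtain ⟨j, hjK, hjT⟩ := hexists
    have hjm : j * m + m ≤ k ^ (n - m) * m := by
      have h := Nat.mul_le_mul_right m (show j + 1 ≤ k ^ (n - m) from hjK)
      rw [Nat.succ_mul] at h
      exact h
    have hw3 : w = w.take (j * m) ++ ((w.drop (j * m)).take n ++ w.drop (j * m + n)) := by
      have hdd : w.drop (j * m + n) = (w.drop (j * m)).drop n := by
        rw [List.drop_drop, Nat.add_comm]
      rw [hdd, List.take_append_drop, List.take_append_drop]
    rw [hw3]
    apply append_mem_kstar
    · exact mdvd_mem hk (by omega) hmn hn2m _ (w.take (j * m))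
        (by rw [List.length_take, min_eq_left (by omega)]) (dvd_mul_left m j)
    · apply cons_mem_kstar
      · refine ⟨Or.inr ?_, hjT⟩
        rw [List.length_take, List.length_drop]
        omega
      · apply ih
        · rw [List.length_drop]
          omega
        · rw [List.length_drop]
          apply Nat.ModEq.add_right_cancel' (j * m + n)
          have h1 : w.length - (j * m + n) + (j * m + n) = w.length :=
            Nat.sub_add_cancel (by omega)
          have h2 : (j * m + n) ≡ (m * k ^ (n - m) + (n - m)) [MOD m] := by
            show (j * m + n) % m = _ % m
            conv_lhs => rw [show j * m + n = (n - m) + (j + 1) * m by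
              rw [Nat.succ_mul]; omega]
            conv_rhs => rw [show m * k ^ (n - m) + (n - m) = (n - m) + k ^ (n - m) * m by omega]
            rw [Nat.add_mul_mod_self_right, Nat.add_mul_mod_self_right]
          calc w.length - (j * m + n) + (j * m + n) = w.length := h1
            _ ≡ b * (m * k ^ (n - m) + (n - m)) + (m * k ^ (n - m) + (n - m)) [MOD m] := by
                rw [← hsm]; exact hmod
            _ ≡ b * (m * k ^ (n - m) + (n - m)) + (j * m + n) [MOD m] :=
                Nat.ModEq.add_left _ h2.symm


lemma upper (hk : 0 < k) (hk2 : 2 ≤ k) {m n : ℕ} (hm2 : 2 ≤ m) (hmn : m < n)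
    (hn2m : n < 2 * m) (hgcd : Nat.gcd m n = 1) (w : List (Fin k))
    (hw : m * (m * k ^ (n - m) + (n - m)) - m - (m * k ^ (n - m) + (n - m)) < w.length) :
    w ∈ (Sc hk m n)∗ := by
  haveI : NeZero m := ⟨by omega⟩
  set L := m * k ^ (n - m) + (n - m) with hL
  have hK2 : 2 ≤ k ^ (n - m) := le_trans hk2 (Nat.le_self_pow (by omega) k)
  have hL2 : 2 * m ≤ L := by
    have h0 : m * 2 ≤ m * k ^ (n - m) := Nat.mul_le_mul_left m hK2
    omega
  have hcopd : Nat.Coprime m (n - m) := by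
    unfold Nat.Coprime
    rw [Nat.gcd_sub_self_right (le_of_lt hmn)]
    exact hgcd
  have hcopL : Nat.Coprime m L := by
    have h1 : Nat.Coprime m ((n - m) + m * k ^ (n - m)) :=
      (Nat.coprime_add_mul_left_right m (n - m) (k ^ (n - m))).mpr hcopd
    rw [hL, Nat.add_comm]
    exact h1
  set b := ((w.length : ZMod m) * (L : ZMod m)⁻¹).val with hb
  have hblt : b < m := ZMod.val_lt _
  have hmodeq : b * L ≡ w.length [MOD m] := by
    have h1 : (L : ZMod m) * (L : ZMod m)⁻¹ = 1 := ZMod.coe_mul_inv_eq_one L hcopL.symm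
    have h2 : ((b * L : ℕ) : ZMod m) = ((w.length : ℕ) : ZMod m) := by
      push_cast
      rw [hb, ZMod.natCast_val, ZMod.cast_id]
      rw [mul_assoc, mul_comm ((L : ZMod m))⁻¹ (L : ZMod m), h1, mul_one]
    exact (ZMod.natCast_eq_natCast_iff _ _ _).mp h2
  have he1 : (m - 1) * L = m * L - L := by rw [Nat.sub_mul, one_mul]
  have he2 : m + L ≤ m * L := Nat.add_le_mul hm2 (by omega)
  have hble : b * L ≤ w.length := by
    by_contra hcon
    push_neg at hcon
    have hd : m ∣ b * L - w.length := (Nat.modEq_iff_dvd' (le_of_lt hcon)).mp hmodeq.symm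
    obtain ⟨t, ht⟩ := hd
    have ht1 : 1 ≤ t := by
      rcases Nat.eq_zero_or_pos t with rfl | h
      · omega
      · exact h
    have ht2 : m ≤ m * t := Nat.le_mul_of_pos_right m ht1
    have hbm : b * L ≤ (m - 1) * L := Nat.mul_le_mul_right L (by omega)
    omega
  exact partA hk hk2 hm2 hmn hn2m b w hble hmodeq.symm


def Wit (hk : 0 < k) (m n : ℕ) : List (Fin k) :=
  ((List.replicate (m - 1) (cyc hk (n - m) (2 * m - n) (k ^ (n - m)))).flatten).take
    (m * (m * k ^ (n - m) + (n - m)) - m - (m * k ^ (n - m) + (n - m)))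

lemma arith_facts (hk2 : 2 ≤ k) {m n : ℕ} (hm2 : 2 ≤ m) (hmn : m < n) (hn2m : n < 2 * m) :
    2 ≤ k ^ (n - m) ∧
    m * (m * k ^ (n - m) + (n - m)) - m - (m * k ^ (n - m) + (n - m)) + m
      = (m - 1) * (m * k ^ (n - m) + (n - m)) := by
  have hK2 : 2 ≤ k ^ (n - m) := le_trans hk2 (Nat.le_self_pow (by omega) k)
  constructor
  · exact hK2
  · have h0 : m * 2 ≤ m * k ^ (n - m) := Nat.mul_le_mul_left m hK2
    have he1 : (m - 1) * (m * k ^ (n - m) + (n - m)) =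
        m * (m * k ^ (n - m) + (n - m)) - (m * k ^ (n - m) + (n - m)) := by
      rw [Nat.sub_mul, one_mul]
    have he2 : m + (m * k ^ (n - m) + (n - m)) ≤ m * (m * k ^ (n - m) + (n - m)) :=
      Nat.add_le_mul hm2 (by omega)
    omega

lemma length_Wit (hk : 0 < k) (hk2 : 2 ≤ k) {m n : ℕ} (hm2 : 2 ≤ m) (hmn : m < n)
    (hn2m : n < 2 * m) :
    (Wit hk m n).length
      = m * (m * k ^ (n - m) + (n - m)) - m - (m * k ^ (n - m) + (n - m)) := by
  obtain ⟨hK2, harith⟩ := arith_facts hk2 hm2 hmn hn2m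
  have hbr : m * k ^ (n - m) = k ^ (n - m) * m := mul_comm _ _
  have hcl : (cyc hk (n - m) (2 * m - n) (k ^ (n - m))).length
      = k ^ (n - m) * ((n - m) + (2 * m - n)) + (n - m) := length_cyc _ _ _ _
  have hdz : (n - m) + (2 * m - n) = m := by omega
  rw [hdz] at hcl
  have hflen := length_flatten_replicate (m - 1) (cyc hk (n - m) (2 * m - n) (k ^ (n - m)))
  rw [hcl] at hflen
  rw [Wit, List.length_take, hflen]
  have : (m - 1) * (k ^ (n - m) * m + (n - m)) = (m - 1) * (m * k ^ (n - m) + (n - m)) := by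
    rw [hbr]
  rw [this]
  omega

lemma lower (hk : 0 < k) (hk2 : 2 ≤ k) {m n : ℕ} (hm2 : 2 ≤ m) (hmn : m < n)
    (hn2m : n < 2 * m) (hgcd : Nat.gcd m n = 1) :
    Wit hk m n ∉ (Sc hk m n)∗ := by
  obtain ⟨hK2, harith⟩ := arith_facts hk2 hm2 hmn hn2m
  have hbr : m * k ^ (n - m) = k ^ (n - m) * m := mul_comm _ _
  have hlenW := length_Wit hk hk2 hm2 hmn hn2m
  have hcopd : Nat.Coprime m (n - m) := by
    unfold Nat.Coprime
    rw [Nat.gcd_sub_self_right (le_of_lt hmn)]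
    exact hgcd
  have hLD : (m * k ^ (n - m) + (n - m)) ≡ (n - m) [MOD m] := by
    show _ % m = _ % m
    conv_lhs => rw [show m * k ^ (n - m) + (n - m) = (n - m) + k ^ (n - m) * m by omega]
    rw [Nat.add_mul_mod_self_right]
  intro hmem
  rw [Language.mem_kstar] at hmem
  obtain ⟨Lst, hjoin, hLS⟩ := hmem
  set G := m * (m * k ^ (n - m) + (n - m)) - m - (m * k ^ (n - m) + (n - m)) with hG
  have main : ∀ (Lst : List (List (Fin k))), (∀ c ∈ Lst, c ∈ Sc hk m n) →
      ∀ p r, p ≤ G → r * (m * k ^ (n - m) + (n - m)) ≤ p →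
        p ≡ r * (n - m) [MOD m] → (Wit hk m n).drop p = Lst.flatten → False := by
    intro Lst
    induction Lst with
    | nil =>
      intro _ p r hpG hrl hmod hdrop
      have hlen0 : (Wit hk m n).length - p = 0 := by
        rw [← List.length_drop, hdrop]
        rfl
      have hpg : p = G := by omega
      subst hpg
      have hmm : (m - 1) * (m * k ^ (n - m) + (n - m)) ≡ (m - 1) * (n - m) [MOD m] :=
        Nat.ModEq.mul_left _ hLD
      have hGm : G ≡ (m - 1) * (n - m) [MOD m] := by
        calc G ≡ G + m [MOD m] := (Nat.add_modEq_right).symm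
          _ = (m - 1) * (m * k ^ (n - m) + (n - m)) := harith
          _ ≡ (m - 1) * (n - m) [MOD m] := hmm
      have hrm : r ≡ m - 1 [MOD m] :=
        Nat.ModEq.cancel_right_of_coprime (by rw [Nat.Coprime] at hcopd; exact hcopd)
          ((hmod.symm.trans hGm))
      have hr1 : m - 1 ≤ r := by
        have h1 : r % m = (m - 1) % m := hrm
        have h2 : (m - 1) % m = m - 1 := Nat.mod_eq_of_lt (by omega)
        have h3 : r % m ≤ r := Nat.mod_le r m
        omega
      have h4 : (m - 1) * (m * k ^ (n - m) + (n - m)) ≤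
          r * (m * k ^ (n - m) + (n - m)) := Nat.mul_le_mul_right _ hr1
      omega
    | cons c Lst ih =>
      intro hall p r hpG hrl hmod hdrop
      have ihall : ∀ c' ∈ Lst, c' ∈ Sc hk m n := fun c' hc' => hall c' (List.mem_cons_of_mem _ hc')
      obtain ⟨hclen, hcT⟩ := hall c List.mem_cons_self
      have hdl : (Wit hk m n).length - p = c.length + Lst.flatten.length := by
        rw [← List.length_drop, hdrop, List.flatten_cons, List.length_append]
      rw [hlenW] at hdl
      rcases hclen with hcm | hcn
      · -- length m chunk
        apply ih ihall (p + m) r (by omega) (by omega)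
        · calc p + m ≡ r * (n - m) + m [MOD m] := hmod.add_right m
            _ ≡ r * (n - m) [MOD m] := Nat.add_modEq_right
        · have : (Wit hk m n).drop (p + m) = ((Wit hk m n).drop p).drop m := by
            rw [List.drop_drop, Nat.add_comm]
          rw [this, hdrop, List.flatten_cons, ← hcm, List.drop_left]
      · -- length n chunk
        have hpn : p + n ≤ G := by omega
        have hLpos : 0 < m * k ^ (n - m) + (n - m) := by omega
        have hrm2 : r + 2 ≤ m := by
          have h5 : r * (m * k ^ (n - m) + (n - m)) <
              (m - 1) * (m * k ^ (n - m) + (n - m)) := by omega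
          have h6 : r < m - 1 := lt_of_mul_lt_mul_right h5 (Nat.zero_le _)
          omega
        have hrlD : r * (m * k ^ (n - m) + (n - m)) ≡ r * (n - m) [MOD m] :=
          Nat.ModEq.mul_left _ hLD
        have hkey : (r + 1) * (m * k ^ (n - m) + (n - m)) ≤ p + n := by
          by_contra hcon2
          push_neg at hcon2
          have hmd : m ∣ p - r * (m * k ^ (n - m) + (n - m)) :=
            (Nat.modEq_iff_dvd' hrl).mp (hrlD.trans hmod.symm)
          obtain ⟨j, hj⟩ := hmd
          have hjm : m * j = j * m := mul_comm _ _
          have hp' : p = r * (m * k ^ (n - m) + (n - m)) + j * m := by omega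
          have hsucc : (r + 1) * (m * k ^ (n - m) + (n - m)) =
              r * (m * k ^ (n - m) + (n - m)) + (m * k ^ (n - m) + (n - m)) := by ring
          have hjlt : j + 2 ≤ k ^ (n - m) := by
            have hjsucc : (j + 1) * m = j * m + m := by rw [Nat.succ_mul]
            have h7 : (j + 1) * m < k ^ (n - m) * m := by omega
            have h8 : j + 1 < k ^ (n - m) := lt_of_mul_lt_mul_right h7 (Nat.zero_le _)
            omega
          have hfac := factor_eq hk (n - m) (2 * m - n) (k ^ (n - m)) (m - 1) r j
            (by omega) hjlt
          have hdz : (n - m) + (2 * m - n) = m := by omega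
          rw [hdz] at hfac
          rw [show m + (n - m) = n by omega] at hfac
          rw [mul_comm (k ^ (n - m)) m] at hfac
          have hc' : c = ((Wit hk m n).drop p).take n := by
            rw [hdrop, List.flatten_cons, ← hcn]
            exact (List.take_left (l₁ := c)).symm
          have hWd : ((Wit hk m n).drop p).take n =
              (((List.replicate (m - 1) (cyc hk (n - m) (2 * m - n) (k ^ (n - m)))).flatten).drop
                p).take n := by
            rw [Wit, List.drop_take]
            rw [List.take_take, min_eq_left (by omega : n ≤ G - p)]
          apply hcT
          refine ⟨rep hk (n - m) j, rep hk (n - m) (j + 1), length_rep hk _ _,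
            length_rep hk _ _, ?_, ?_⟩
          · rw [fv_rep hk _ _ (by omega), fv_rep hk _ _ (by omega)]
          · rw [hc', hWd, hp', hfac]
        apply ih ihall (p + n) (r + 1) (by omega) hkey
        · have e : r * (n - m) + n = (r + 1) * (n - m) + m := by
            rw [Nat.succ_mul]; omega
          calc p + n ≡ r * (n - m) + n [MOD m] := hmod.add_right n
            _ = (r + 1) * (n - m) + m := e
            _ ≡ (r + 1) * (n - m) [MOD m] := Nat.add_modEq_right
        · have : (Wit hk m n).drop (p + n) = ((Wit hk m n).drop p).drop n := by
            rw [List.drop_drop, Nat.add_comm]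
          rw [this, hdrop, List.flatten_cons, ← hcn, List.drop_left]
  exact main Lst hLS 0 0 (Nat.zero_le _) (by simp) (by simp [Nat.ModEq])
    (by simpa using hjoin)

end StmtThirteen

open StmtThirteen in
theorem longest_omitted_exact (k : ℕ) (hk : 2 ≤ k) (m n : ℕ)
    (hm : 0 < m) (hmn : m < n) (hn2m : n < 2 * m) (hgcd : Nat.gcd m n = 1)
    (val : List (Fin k) → ℕ)
    (hval : ∀ w, val w = w.foldl (fun acc d => acc * k + d.val) 0)
    (T : Language (Fin k))
    (hT : T = {w : List (Fin k) | ∃ u v : List (Fin k),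
      u.length = n - m ∧ v.length = n - m ∧ val v = val u + 1 ∧
      w = u ++ List.replicate (2 * m - n) (⟨0, by omega⟩ : Fin k) ++ v})
    (S : Language (Fin k))
    (hS : S = {w : List (Fin k) | (w.length = m ∨ w.length = n) ∧ w ∉ T})
    (l : ℕ) (hl : l = m * k ^ (n - m) + (n - m)) :
    Set.Finite ((S∗ : Language (Fin k))ᶜ) ∧
    IsGreatest {len : ℕ | ∃ w : List (Fin k), w ∉ S∗ ∧ w.length = len} (m * l - m - l) := by
  subst hl
  have hk0 : 0 < k := by omega
  have hm2 : 2 ≤ m := by omega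
  have hTT : T = Tc hk0 m n := by
    rw [hT]
    ext w
    constructor
    · rintro ⟨u, v, h1, h2, h3, h4⟩
      refine ⟨u, v, h1, h2, ?_, h4⟩
      have e1 : fv v = val v := (hval v).symm
      have e2 : fv u = val u := (hval u).symm
      rw [e1, e2]
      exact h3
    · rintro ⟨u, v, h1, h2, h3, h4⟩
      refine ⟨u, v, h1, h2, ?_, h4⟩
      rw [hval, hval]
      exact h3
  have hSS : S = Sc hk0 m n := by
    rw [hS, hTT]
    rfl
  rw [hSS]
  constructor
  · apply Set.Finite.subset (List.finite_length_le (Fin k)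
      (m * (m * k ^ (n - m) + (n - m)) - m - (m * k ^ (n - m) + (n - m))))
    intro w hw
    by_contra hlen
    simp only [Set.mem_setOf_eq, not_le] at hlen
    exact hw (upper hk0 hk hm2 hmn hn2m hgcd w hlen)
  · constructor
    · exact ⟨Wit hk0 m n, lower hk0 hk hm2 hmn hn2m hgcd, length_Wit hk0 hk hm2 hmn hn2m⟩
    · rintro len ⟨w, hw, rfl⟩
      by_contra h
      push_neg at h
      exact hw (upper hk0 hk hm2 hmn hn2m hgcd w h)
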